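/- In the power series ring ℤ[[q]], the element φ_q := (q^2 + q − 1 + s)/(2q) where s is the unique square root of (q^2+3q+1)(q^2−q+1) in ℤ[[q]] with constant term 1, has Taylor expansion beginning 1 + q^2 − q^3 + 2q^4 − 4q^5 + 8q^6 − 17q^7 + ... ; in particular its coefficients of q^0 through q^7 are 1, 0, 1, −1, 2, −4, 8, −17. -/

import Mathlib

open PowerSeries

theorem qGolden_taylor_coeffs (s φ : PowerSeries ℚ)
    (hs : s ^ 2 = (X ^ 2 + 3 * X + 1) * (X ^ 2 - X + 1))
    (hs0 : constantCoeff s = 1)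
    (hφ : 2 * X * φ = X ^ 2 + X - 1 + s) :
    coeff 0 φ = 1 ∧ coeff 1 φ = 0 ∧ coeff 2 φ = 1 ∧ coeff 3 φ = -1 ∧
    coeff 4 φ = 2 ∧ coeff 5 φ = -4 ∧ coeff 6 φ = 8 ∧ coeff 7 φ = -17 := by
  have hs' : s * s = X^4 + C 2*X^3 - X^2 + C 2*X + 1 := by
    rw [← pow_two, hs]; simp only [map_ofNat]; ring
  have hc : ∀ n, coeff n (s*s) = coeff n (X^4 + C 2*X^3 - X^2 + C 2*X + 1 : PowerSeries ℚ) :=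
    fun n => by rw [hs']
  have e1 := hc 1; have e2 := hc 2; have e3 := hc 3
  have e4 := hc 4; have e5 := hc 5; have e6 := hc 6; have e7 := hc 7; have e8 := hc 8
  simp only [coeff_mul, Finset.Nat.sum_antidiagonal_eq_sum_range_succ_mk, Finset.sum_range_succ,
    Finset.sum_range_zero, coeff_X_pow, coeff_one, coeff_X, coeff_C, coeff_zero_eq_constantCoeff,
    map_add, map_sub, zero_add, one_mul, mul_one] at e1 e2 e3 e4 e5 e6 e7 e8
  norm_num at e1 e2 e3 e4 e5 e6 e7 e8
  rw [hs0] at e1 e2 e3 e4 e5 e6 e7 e8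
  have a1 : coeff 1 s = 1 := by linarith
  rw [a1] at e2 e3 e4 e5 e6 e7 e8
  have a2 : coeff 2 s = -1 := by linarith
  rw [a2] at e3 e4 e5 e6 e7 e8
  have a3 : coeff 3 s = 2 := by linarith
  rw [a3] at e4 e5 e6 e7 e8
  have a4 : coeff 4 s = -2 := by linarith
  rw [a4] at e5 e6 e7 e8
  have a5 : coeff 5 s = 4 := by linarith
  rw [a5] at e6 e7 e8
  have a6 : coeff 6 s = -8 := by linarith
  rw [a6] at e7 e8
  have a7 : coeff 7 s = 16 := by linarith
  rw [a7] at e8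
  have a8 : coeff 8 s = -34 := by linarith
  have hφ' : X * (C 2 * φ) = X ^ 2 + X - 1 + s := by
    rw [← hφ]; simp only [map_ofNat]; ring
  have hf : ∀ n : ℕ, 2 * coeff n φ = coeff (n+1) (X ^ 2 + X - 1 + s : PowerSeries ℚ) :=
    fun n => by rw [← hφ', coeff_succ_X_mul, coeff_C_mul]
  have f0 := hf 0; have f1 := hf 1; have f2 := hf 2; have f3 := hf 3
  have f4 := hf 4; have f5 := hf 5; have f6 := hf 6; have f7 := hf 7
  simp only [map_add, map_sub, coeff_X_pow, coeff_X, coeff_one,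
    a1, a2, a3, a4, a5, a6, a7, a8] at f0 f1 f2 f3 f4 f5 f6 f7
  norm_num at f0 f1 f2 f3 f4 f5 f6 f7
  rw [← coeff_zero_eq_constantCoeff_apply] at f0
  refine ⟨by linarith, by linarith, by linarith, by linarith,
    by linarith, by linarith, by linarith, by linarith⟩
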